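/- arXiv:1806.01272 — 3 statements merged into one kernel-verified Lean document; each statement's English description precedes it below -/
import Mathlib

section
/- Let T be a rank one bounded operator on a complex Hilbert space H that is not selfadjoint (T ≠ T*). Then the semigroup S(T, T*) generated by T and T* is a selfadjoint-ideal (SI) semigroup that is not simple if and only if T is not normal (T T* ≠ T* T), tr T is real with tr T ∉ {0, 1, −1}, and ‖T‖ = 1. -/
open ContinuousLinearMap
open scoped ComplexInnerProductSpace

variable {H : Type*} [NormedAddCommGroup H] [InnerProductSpace ℂ H] [CompleteSpace H]

/-- `J` is a (two-sided) semigroup-ideal of `S`. -/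
def IsSemigroupIdeal {M : Type*} [Mul M] (S J : Set M) : Prop :=
  J ⊆ S ∧ ∀ T ∈ J, ∀ X ∈ S, X * T ∈ J ∧ T * X ∈ J

/-- `S` is a selfadjoint-ideal (SI) semigroup: every semigroup-ideal of `S`
is closed under adjoints. -/
def IsSI (S : Set (H →L[ℂ] H)) : Prop :=
  ∀ J : Set (H →L[ℂ] H), IsSemigroupIdeal S J → ∀ T ∈ J, adjoint T ∈ J

/-- `S` is simple: every ideal of `S` containing a nonzero element equals `S`. -/
def IsSimpleSemigroup {M : Type*} [Mul M] [Zero M] (S : Set M) : Prop :=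
  ∀ J : Set M, IsSemigroupIdeal S J → (∃ T ∈ J, T ≠ 0) → J = S

/-- `S(T, T*)`: the semigroup generated by `T` and `T*`, i.e. all finite products
`A₁ ⋯ A_k` (`k ≥ 1`) with each `Aᵢ ∈ {T, T*}`. -/
noncomputable def genSG (T : H →L[ℂ] H) : Set (H →L[ℂ] H) :=
  (Subsemigroup.closure {T, adjoint T} : Subsemigroup (H →L[ℂ] H))

set_option linter.unusedSectionVars false
set_option linter.unusedVariables false
set_option maxHeartbeats 1000000

noncomputable def Ee (a b : H) : H →L[ℂ] H :=
  (ContinuousLinearMap.toSpanSingleton ℂ a).comp (innerSL ℂ b)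

lemma Ee_apply (a b x : H) : Ee a b x = ⟪b, x⟫ • a := rfl

lemma Ee_mul (a b c d : H) : Ee a b * Ee c d = ⟪b, c⟫ • Ee a d := by
  ext x
  simp [Ee_apply, ContinuousLinearMap.mul_apply, inner_smul_right, smul_smul, mul_comm]

lemma Ee_adjoint (a b : H) : adjoint (Ee a b) = Ee b a := by
  symm
  rw [ContinuousLinearMap.eq_adjoint_iff]
  intro x y
  simp [Ee_apply, inner_smul_left, inner_smul_right]
  ring

noncomputable def Mon (f g : H) (i j k : ℕ) : ℂ :=
  ⟪g,f⟫ ^ i * ((starRingEnd ℂ) ⟪g,f⟫) ^ j * ⟪g,g⟫ ^ k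

noncomputable def vv (f g : H) : Bool → H := fun b => if b then f else g

@[simp] lemma vv_true (f g : H) : vv f g true = f := rfl
@[simp] lemma vv_false (f g : H) : vv f g false = g := rfl

def e1 (b c : Bool) : ℕ := if b = false ∧ c = true then 1 else 0
def e2 (b c : Bool) : ℕ := if b = true ∧ c = false then 1 else 0
def e3 (b c : Bool) : ℕ := if b = false ∧ c = false then 1 else 0

def cndS (a b : Bool) (i j k : ℕ) : Prop :=
  if a then (if b then 1 ≤ k else (k = 0 → j = 0))
  else (if b then (k = 0 → i = 0) else True)

def cndJ1 (a b : Bool) (i j k : ℕ) : Prop :=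
  if a then (if b then 1 ≤ k else (k = 0 → j = 0))
  else (if b then 1 ≤ k else True)

def SS (f g : H) : Set (H →L[ℂ] H) :=
  {x | ∃ a b i j k, cndS a b i j k ∧ x = Mon f g i j k • Ee (vv f g a) (vv f g b)}

lemma Mon_mul (f g : H) (i j k i' j' k' : ℕ) :
    Mon f g i j k * Mon f g i' j' k' = Mon f g (i+i') (j+j') (k+k') := by
  simp [Mon, pow_add]; ring

lemma Mon_zero (f g : H) : Mon f g 0 0 0 = 1 := by simp [Mon]

lemma Mon_conj (f g : H) (i j k : ℕ) :
    (starRingEnd ℂ) (Mon f g i j k) = Mon f g j i k := by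
  rw [Mon, Mon, map_mul, map_mul, map_pow, map_pow, map_pow, Complex.conj_conj,
    inner_self_conj]
  ring

lemma MonL (f g : H) (i j k : ℕ) : Mon f g i j k * ⟪g,f⟫ = Mon f g (i+1) j k := by
  simp only [Mon, pow_succ]; ring

lemma MonCL (f g : H) (i j k : ℕ) : Mon f g i j k * ⟪f,g⟫ = Mon f g i (j+1) k := by
  rw [← inner_conj_symm f g]
  simp only [Mon, pow_succ]; ring

lemma MonN (f g : H) (i j k : ℕ) : Mon f g i j k * ⟪g,g⟫ = Mon f g i j (k+1) := by
  simp only [Mon, pow_succ]; ring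

lemma pairing (f g : H) (hff : ⟪f,f⟫ = (1:ℂ)) (b c : Bool) :
    ⟪vv f g b, vv f g c⟫ = Mon f g (e1 b c) (e2 b c) (e3 b c) := by
  rcases b <;> rcases c <;>
    simp [e1, e2, e3, Mon, hff, inner_conj_symm, -inner_self_eq_norm_sq_to_K]

lemma prodEE (f g : H) (hff : ⟪f,f⟫ = (1:ℂ)) (a b c d : Bool) (i j k i' j' k' : ℕ) :
    (Mon f g i j k • Ee (vv f g a) (vv f g b)) * (Mon f g i' j' k' • Ee (vv f g c) (vv f g d)) =
      Mon f g (i+i'+e1 b c) (j+j'+e2 b c) (k+k'+e3 b c) • Ee (vv f g a) (vv f g d) := by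
  rw [smul_mul_assoc, mul_smul_comm, Ee_mul, pairing f g hff, smul_smul, smul_smul,
    Mon_mul, Mon_mul]

lemma cndS_mul (a b c d : Bool) (i j k i' j' k' : ℕ)
    (h1 : cndS a b i j k) (h2 : cndS c d i' j' k') :
    cndS a d (i+i'+e1 b c) (j+j'+e2 b c) (k+k'+e3 b c) := by
  rcases a <;> rcases b <;> rcases c <;> rcases d <;>
    simp_all [cndS, e1, e2, e3] <;> omega

lemma genSG_eq_SS (f g : H) (hff : ⟪f,f⟫ = (1:ℂ)) :
    genSG (Ee f g) = SS f g := by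
  have hadj : adjoint (Ee f g) = Ee g f := Ee_adjoint f g
  apply Set.Subset.antisymm
  · -- closure ≤ SS
    intro x hx
    have hx' : x ∈ Subsemigroup.closure {Ee f g, Ee g f} := by
      rw [genSG, hadj] at hx; exact hx
    have : (Subsemigroup.closure {Ee f g, Ee g f} : Subsemigroup (H →L[ℂ] H)) ≤
        ⟨SS f g, by
          rintro x y ⟨a,b,i,j,k,hc,rfl⟩ ⟨c,d,i',j',k',hc',rfl⟩
          exact ⟨a, d, _, _, _, cndS_mul a b c d i j k i' j' k' hc hc',
            (prodEE f g hff a b c d i j k i' j' k')⟩⟩ := by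
      rw [Subsemigroup.closure_le]
      rintro y (rfl | rfl)
      · exact ⟨true, false, 0, 0, 0, by simp [cndS], by simp [Mon_zero]⟩
      · exact ⟨false, true, 0, 0, 0, by simp [cndS], by simp [Mon_zero]⟩
    exact this hx'
  · -- SS ⊆ closure
    rintro x ⟨a,b,i,j,k,hc,rfl⟩
    rw [genSG, hadj]
    set C := Subsemigroup.closure {Ee f g, Ee g f} with hC
    have hT : Ee f g ∈ C := Subsemigroup.subset_closure (by simp)
    have hTs : Ee g f ∈ C := Subsemigroup.subset_closure (by simp)
    have key : ∀ (a b : Bool) (i j k : ℕ), cndS a b i j k →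
        Mon f g i j k • Ee (vv f g a) (vv f g b) ∈ C := by
      have h1 : ∀ i, Mon f g i 0 0 • Ee f g ∈ C := by
        intro i; induction i with
        | zero => simpa [Mon_zero] using hT
        | succ n ih =>
          have e : (Mon f g n 0 0 • Ee f g) * Ee f g = Mon f g (n+1) 0 0 • Ee f g := by
            rw [smul_mul_assoc, Ee_mul, smul_smul, MonL]
          have := mul_mem ih hT; rw [e] at this; exact this
      have h2 : ∀ j, Mon f g 0 j 0 • Ee g f ∈ C := by
        intro j; induction j with
        | zero => simpa [Mon_zero] using hTs
        | succ n ih =>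
          have e : (Mon f g 0 n 0 • Ee g f) * Ee g f = Mon f g 0 (n+1) 0 • Ee g f := by
            rw [smul_mul_assoc, Ee_mul, smul_smul, MonCL]
          have := mul_mem ih hTs; rw [e] at this; exact this
      have hgg : ∀ i j k, Mon f g i j k • Ee g g ∈ C := by
        intro i j k
        induction k with
        | zero =>
          have e : (Mon f g 0 j 0 • Ee g f) * (Mon f g i 0 0 • Ee f g) =
              Mon f g i j 0 • Ee g g := by
            rw [smul_mul_assoc, mul_smul_comm, Ee_mul, hff, smul_smul, smul_smul, mul_one,
              Mon_mul]
            norm_num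
          have := mul_mem (h2 j) (h1 i); rw [e] at this; exact this
        | succ n ih =>
          have hQ : Ee g g ∈ C := by
            have e : Ee g f * Ee f g = Ee g g := by rw [Ee_mul, hff, one_smul]
            have := mul_mem hTs hT; rw [e] at this; exact this
          have e : (Mon f g i j n • Ee g g) * Ee g g = Mon f g i j (n+1) • Ee g g := by
            rw [smul_mul_assoc, Ee_mul, smul_smul, MonN]
          have := mul_mem ih hQ; rw [e] at this; exact this
      have hffC : ∀ i j k, Mon f g i j (k+1) • Ee f f ∈ C := by
        intro i j k
        induction k with
        | zero =>
          have e : (Mon f g i 0 0 • Ee f g) * (Mon f g 0 j 0 • Ee g f) =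
              Mon f g i j 1 • Ee f f := by
            rw [smul_mul_assoc, mul_smul_comm, Ee_mul, smul_smul, smul_smul, Mon_mul, MonN]
            norm_num
          have := mul_mem (h1 i) (h2 j); rw [e] at this; exact this
        | succ n ih =>
          have hP : Mon f g 0 0 1 • Ee f f ∈ C := by
            have e : Ee f g * Ee g f = Mon f g 0 0 1 • Ee f f := by
              rw [Ee_mul]; congr 1; simp [Mon]
            have := mul_mem hT hTs; rw [e] at this; exact this
          have e : (Mon f g i j (n+1) • Ee f f) * (Mon f g 0 0 1 • Ee f f) =
              Mon f g i j (n+2) • Ee f f := by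
            rw [smul_mul_assoc, mul_smul_comm, Ee_mul, hff, smul_smul, smul_smul, mul_one,
              Mon_mul]
            norm_num
          have := mul_mem ih hP; rw [e] at this; exact this
      have hfgk : ∀ i j k, Mon f g i j (k+1) • Ee f g ∈ C := by
        intro i j k
        have e : (Mon f g i j (k+1) • Ee f f) * Ee f g = Mon f g i j (k+1) • Ee f g := by
          rw [smul_mul_assoc, Ee_mul, hff, one_smul]
        have := mul_mem (hffC i j k) hT; rw [e] at this; exact this
      have hgfk : ∀ i j k, Mon f g i j (k+1) • Ee g f ∈ C := by
        intro i j k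
        have e : Ee g f * (Mon f g i j (k+1) • Ee f f) = Mon f g i j (k+1) • Ee g f := by
          rw [mul_smul_comm, Ee_mul, hff, one_smul]
        have := mul_mem hTs (hffC i j k); rw [e] at this; exact this
      rintro (_|_) (_|_) i j k hc
      · exact hgg i j k
      · -- a = false, b = true : type gf, cnd : k = 0 → i = 0
        rcases k with _ | k
        · have hi : i = 0 := by simpa [cndS] using hc
          subst hi; exact h2 j
        · exact hgfk i j k
      · -- a = true, b = false : type fg
        rcases k with _ | k
        · have hj : j = 0 := by simpa [cndS] using hc
          subst hj; exact h1 i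
        · exact hfgk i j k
      · -- a = true, b = true : k ≥ 1
        rcases k with _ | k
        · simp [cndS] at hc
        · exact hffC i j k
    exact key a b i j k hc

lemma adjoint_smul (s : ℂ) (A : H →L[ℂ] H) :
    adjoint (s • A) = (starRingEnd ℂ) s • adjoint A := by
  rw [← ContinuousLinearMap.star_eq_adjoint, ← ContinuousLinearMap.star_eq_adjoint, star_smul]
  rfl

lemma smul_mul_smul' (s t : ℂ) (A B : H →L[ℂ] H) :
    (s • A) * (t • B) = (s * t) • (A * B) := by
  rw [smul_mul_assoc, mul_smul_comm, smul_smul]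

lemma Ee_ne_zero {a b : H} (ha : a ≠ 0) (hb : b ≠ 0) : Ee a b ≠ 0 := by
  intro h
  have := congrArg (fun (A : H →L[ℂ] H) => A b) h
  simp [Ee_apply, smul_eq_zero, inner_self_eq_zero] at this
  tauto

lemma smul_Ee_cancel {a b : H} (ha : a ≠ 0) (hb : b ≠ 0) {s t : ℂ}
    (h : s • Ee a b = t • Ee a b) : s = t := by
  have := congrArg (fun (A : H →L[ℂ] H) => A b) h
  simp only [ContinuousLinearMap.smul_apply, Ee_apply, smul_smul] at this
  have h2 : (s * ⟪b,b⟫ - t * ⟪b,b⟫) • a = 0 := by rw [sub_smul, this, sub_self]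
  rcases smul_eq_zero.mp h2 with h3 | h3
  · have hbb : (⟪b,b⟫ : ℂ) ≠ 0 := by simpa [inner_self_eq_zero] using hb
    have : (s - t) * ⟪b,b⟫ = 0 := by ring_nf; ring_nf at h3; linear_combination h3
    rcases mul_eq_zero.mp this with h4 | h4
    · exact sub_eq_zero.mp h4
    · exact absurd h4 hbb
  · exact absurd h3 ha

lemma smul_vv_ne {f g : H} (hf0 : f ≠ 0) (hg0 : g ≠ 0) (b : Bool) : vv f g b ≠ 0 := by
  rcases b <;> simp [hf0, hg0]

lemma hind {f g : H} (hff : ⟪f,f⟫ = (1:ℂ)) (hg0 : g ≠ 0)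
    (hd : ⟪g,g⟫ - ⟪f,g⟫ * ⟪g,f⟫ ≠ 0) (x y : ℂ) (h : x • f = y • g) : x = 0 ∧ y = 0 := by
  set w : H := ⟪g,g⟫ • f - ⟪g,f⟫ • g with hw
  have hfw : ⟪f, w⟫ = ⟪g,g⟫ - ⟪f,g⟫ * ⟪g,f⟫ := by
    simp [hw, inner_sub_right, inner_smul_right, hff, -inner_self_eq_norm_sq_to_K]; ring
  have hgw : ⟪g, w⟫ = 0 := by
    simp [hw, inner_sub_right, inner_smul_right]; ring
  have h1 : ⟪w, x • f⟫ = ⟪w, y • g⟫ := by rw [h]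
  rw [inner_smul_right, inner_smul_right, ← inner_conj_symm w f, ← inner_conj_symm w g,
    hfw, hgw] at h1
  simp only [map_zero, mul_zero] at h1
  have hx : x = 0 := by
    rcases mul_eq_zero.mp h1 with h' | h'
    · exact h'
    · exact absurd (by simpa using congrArg (starRingEnd ℂ) h') hd
  refine ⟨hx, ?_⟩
  rw [hx, zero_smul] at h
  rcases smul_eq_zero.mp h.symm with h' | h'
  · exact h'
  · exact absurd h' hg0

lemma pair_eq {f g : H} (hff : ⟪f,f⟫ = (1:ℂ)) (hf0 : f ≠ 0) (hg0 : g ≠ 0)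
    (hd : ⟪g,g⟫ - ⟪f,g⟫ * ⟪g,f⟫ ≠ 0) (a c : Bool) (x y : ℂ)
    (h : x • vv f g a = y • vv f g c) : (x = 0 ∧ y = 0) ∨ (a = c ∧ x = y) := by
  rcases a <;> rcases c <;> simp only [vv_true, vv_false] at h
  · right
    refine ⟨rfl, ?_⟩
    have : (x - y) • g = 0 := by rw [sub_smul, h, sub_self]
    rcases smul_eq_zero.mp this with h' | h'
    · exact sub_eq_zero.mp h'
    · exact absurd h' hg0
  · left; have := hind hff hg0 hd y x h.symm; exact ⟨this.2, this.1⟩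
  · left; exact hind hff hg0 hd x y h
  · right
    refine ⟨rfl, ?_⟩
    have : (x - y) • f = 0 := by rw [sub_smul, h, sub_self]
    rcases smul_eq_zero.mp this with h' | h'
    · exact sub_eq_zero.mp h'
    · exact absurd h' hf0

lemma NP {f g : H} (hff : ⟪f,f⟫ = (1:ℂ)) (hf0 : f ≠ 0) (hg0 : g ≠ 0)
    (hd : ⟪g,g⟫ - ⟪f,g⟫ * ⟪g,f⟫ ≠ 0) (a b c d : Bool) (s t : ℂ)
    (h : s • Ee (vv f g a) (vv f g b) = t • Ee (vv f g c) (vv f g d)) :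
    (s = 0 ∧ t = 0) ∨ (a = c ∧ b = d ∧ s = t) := by
  set u : H := g - ⟪f,g⟫ • f with hu
  set w : H := ⟪g,g⟫ • f - ⟪g,f⟫ • g with hw
  have hfu : ⟪f, u⟫ = 0 := by simp [hu, inner_sub_right, inner_smul_right, hff, -inner_self_eq_norm_sq_to_K]
  have hgu : ⟪g, u⟫ = ⟪g,g⟫ - ⟪f,g⟫ * ⟪g,f⟫ := by
    simp [hu, inner_sub_right, inner_smul_right]
  have hfw : ⟪f, w⟫ = ⟪g,g⟫ - ⟪f,g⟫ * ⟪g,f⟫ := by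
    simp [hw, inner_sub_right, inner_smul_right, hff, -inner_self_eq_norm_sq_to_K]; ring
  have hgw : ⟪g, w⟫ = 0 := by
    simp [hw, inner_sub_right, inner_smul_right]; ring
  have equ : (s * ⟪vv f g b, u⟫) • vv f g a = (t * ⟪vv f g d, u⟫) • vv f g c := by
    have := congrArg (fun (A : H →L[ℂ] H) => A u) h
    simpa [Ee_apply, smul_smul, mul_comm] using this
  have eqw : (s * ⟪vv f g b, w⟫) • vv f g a = (t * ⟪vv f g d, w⟫) • vv f g c := by
    have := congrArg (fun (A : H →L[ℂ] H) => A w) h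
    simpa [Ee_apply, smul_smul, mul_comm] using this
  have hmul0 : ∀ z : ℂ, z * (⟪g,g⟫ - ⟪f,g⟫ * ⟪g,f⟫) = 0 → z = 0 := by
    intro z hz
    rcases mul_eq_zero.mp hz with h' | h'
    · exact h'
    · exact absurd h' hd
  rcases b <;> rcases d
  · -- b = false, d = false : use u
    simp only [vv_false] at equ
    rw [hgu] at equ
    rcases pair_eq hff hf0 hg0 hd _ _ _ _ equ with ⟨h1, h2⟩ | ⟨h1, h2⟩
    · exact Or.inl ⟨hmul0 s h1, hmul0 t h2⟩
    · exact Or.inr ⟨h1, rfl, mul_right_cancel₀ hd h2⟩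
  · -- b = false, d = true
    simp only [vv_false, vv_true] at equ eqw
    rw [hgu, hfu, mul_zero, zero_smul] at equ
    rw [hgw, hfw, mul_zero, zero_smul] at eqw
    left
    constructor
    · rcases smul_eq_zero.mp equ with h' | h'
      · exact hmul0 s h'
      · exact absurd h' (smul_vv_ne hf0 hg0 _)
    · rcases smul_eq_zero.mp eqw.symm with h' | h'
      · exact hmul0 t h'
      · exact absurd h' (smul_vv_ne hf0 hg0 _)
  · -- b = true, d = false
    simp only [vv_false, vv_true] at equ eqw
    rw [hfu, mul_zero, zero_smul, hgu] at equ
    rw [hfw, hgw, mul_zero, zero_smul] at eqw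
    left
    constructor
    · rcases smul_eq_zero.mp eqw with h' | h'
      · exact hmul0 s h'
      · exact absurd h' (smul_vv_ne hf0 hg0 _)
    · rcases smul_eq_zero.mp equ.symm with h' | h'
      · exact hmul0 t h'
      · exact absurd h' (smul_vv_ne hf0 hg0 _)
  · -- b = true, d = true : use w
    simp only [vv_true] at eqw
    rw [hfw] at eqw
    rcases pair_eq hff hf0 hg0 hd _ _ _ _ eqw with ⟨h1, h2⟩ | ⟨h1, h2⟩
    · exact Or.inl ⟨hmul0 s h1, hmul0 t h2⟩
    · exact Or.inr ⟨h1, rfl, mul_right_cancel₀ hd h2⟩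
lemma cndJ1_sub (a b : Bool) (i j k : ℕ) (h : cndJ1 a b i j k) : cndS a b i j k := by
  rcases a <;> rcases b <;> simp_all [cndS, cndJ1] <;> omega

lemma cndS_of_pos (a b : Bool) {i j k : ℕ} (h : 1 ≤ k) : cndS a b i j k := by
  rcases a <;> rcases b <;> simp_all [cndS] <;> omega

lemma cndJ1_mulL (a b c d : Bool) (i j k i' j' k' : ℕ)
    (h1 : cndS a b i j k) (h2 : cndJ1 c d i' j' k') :
    cndJ1 a d (i+i'+e1 b c) (j+j'+e2 b c) (k+k'+e3 b c) := by
  rcases a <;> rcases b <;> rcases c <;> rcases d <;>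
    simp_all [cndS, cndJ1, e1, e2, e3] <;> omega

lemma cndJ1_mulR (a b c d : Bool) (i j k i' j' k' : ℕ)
    (h1 : cndJ1 a b i j k) (h2 : cndS c d i' j' k') :
    cndJ1 a d (i+i'+e1 b c) (j+j'+e2 b c) (k+k'+e3 b c) := by
  rcases a <;> rcases b <;> rcases c <;> rcases d <;>
    simp_all [cndS, cndJ1, e1, e2, e3] <;> omega

lemma Mon100 (f g : H) : Mon f g 1 0 0 = ⟪g,f⟫ := by simp [Mon]
lemma Mon010 (f g : H) : Mon f g 0 1 0 = (starRingEnd ℂ) ⟪g,f⟫ := by simp [Mon]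
lemma Mon001 (f g : H) : Mon f g 0 0 1 = ⟪g,g⟫ := by simp [Mon]

def J1set (f g : H) : Set (H →L[ℂ] H) :=
  {x | ∃ a b i j k, cndJ1 a b i j k ∧ x = Mon f g i j k • Ee (vv f g a) (vv f g b)}

lemma J1_ideal (f g : H) (hff : ⟪f,f⟫ = (1:ℂ)) :
    IsSemigroupIdeal (SS f g) (J1set f g) := by
  constructor
  · rintro x ⟨a,b,i,j,k,hc,rfl⟩
    exact ⟨a,b,i,j,k, cndJ1_sub a b i j k hc, rfl⟩
  · rintro Z ⟨a,b,i,j,k,hc,rfl⟩ X ⟨c,d,i',j',k',hc',rfl⟩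
    constructor
    · rw [prodEE f g hff c d a b]
      exact ⟨c,b,_,_,_, cndJ1_mulL c d a b i' j' k' i j k hc' hc, rfl⟩
    · rw [prodEE f g hff a b c d]
      exact ⟨a,d,_,_,_, cndJ1_mulR a b c d i j k i' j' k' hc hc', rfl⟩

lemma T_mem_SS (f g : H) : Ee f g ∈ SS f g :=
  ⟨true, false, 0, 0, 0, by simp [cndS], by rw [Mon_zero, one_smul]; rfl⟩

lemma Ts_mem_SS (f g : H) : Ee g f ∈ SS f g :=
  ⟨false, true, 0, 0, 0, by simp [cndS], by rw [Mon_zero, one_smul]; rfl⟩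

lemma condA (f g : H) (hff : ⟪f,f⟫ = (1:ℂ)) (hf0 : f ≠ 0) (hg0 : g ≠ 0)
    (hd : ⟪g,g⟫ - ⟪f,g⟫ * ⟪g,f⟫ ≠ 0) (hSI : IsSI (genSG (Ee f g))) :
    ∃ i j k : ℕ, 1 ≤ k ∧ Mon f g i j k = 1 := by
  have hgen := genSG_eq_SS f g hff
  have hideal : IsSemigroupIdeal (genSG (Ee f g)) (J1set f g) := by
    rw [hgen]; exact J1_ideal f g hff
  have hTJ : Ee f g ∈ J1set f g :=
    ⟨true, false, 0, 0, 0, by simp [cndJ1], by rw [Mon_zero, one_smul]; rfl⟩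
  have hadj := hSI (J1set f g) hideal (Ee f g) hTJ
  rw [Ee_adjoint] at hadj
  obtain ⟨a,b,i,j,k,hc,heq⟩ := hadj
  have heq' : (1:ℂ) • Ee (vv f g false) (vv f g true) = Mon f g i j k • Ee (vv f g a) (vv f g b) := by
    rw [one_smul]; exact heq
  rcases NP hff hf0 hg0 hd _ _ _ _ _ _ heq' with ⟨h1, _⟩ | ⟨ha, hb, hm⟩
  · exact absurd h1 one_ne_zero
  · refine ⟨i, j, k, ?_, hm.symm⟩
    rw [← ha, ← hb] at hc
    simpa [cndJ1] using hc

def J2set (f g : H) : Set (H →L[ℂ] H) :=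
  {x | ∃ a b i j k, (1 ≤ i ∧ cndJ1 a b i j k) ∧ x = Mon f g i j k • Ee (vv f g a) (vv f g b)}

lemma J2_ideal (f g : H) (hff : ⟪f,f⟫ = (1:ℂ)) :
    IsSemigroupIdeal (SS f g) (J2set f g) := by
  constructor
  · rintro x ⟨a,b,i,j,k,hc,rfl⟩
    exact ⟨a,b,i,j,k, cndJ1_sub a b i j k hc.2, rfl⟩
  · rintro Z ⟨a,b,i,j,k,hc,rfl⟩ X ⟨c,d,i',j',k',hc',rfl⟩
    constructor
    · rw [prodEE f g hff c d a b]
      refine ⟨c,b,_,_,_, ⟨by omega, cndJ1_mulL c d a b i' j' k' i j k hc' hc.2⟩, rfl⟩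
    · rw [prodEE f g hff a b c d]
      refine ⟨a,d,_,_,_, ⟨by have := hc.1; omega, cndJ1_mulR a b c d i j k i' j' k' hc.2 hc'⟩, rfl⟩

lemma condB (f g : H) (hff : ⟪f,f⟫ = (1:ℂ)) (hf0 : f ≠ 0) (hg0 : g ≠ 0)
    (hd : ⟪g,g⟫ - ⟪f,g⟫ * ⟪g,f⟫ ≠ 0) (hSI : IsSI (genSG (Ee f g))) (hL0 : ⟪g,f⟫ ≠ (0:ℂ)) :
    ∃ i j k : ℕ, 1 ≤ i ∧ 1 ≤ k ∧ (starRingEnd ℂ) ⟪g,f⟫ = Mon f g i j k := by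
  have hgen := genSG_eq_SS f g hff
  have hideal : IsSemigroupIdeal (genSG (Ee f g)) (J2set f g) := by
    rw [hgen]; exact J2_ideal f g hff
  have hTJ : ⟪g,f⟫ • Ee f g ∈ J2set f g := by
    refine ⟨true, false, 1, 0, 0, ⟨le_refl 1, by simp [cndJ1]⟩, ?_⟩
    rw [Mon100]; rfl
  have hadj := hSI _ hideal _ hTJ
  rw [adjoint_smul, Ee_adjoint] at hadj
  obtain ⟨a,b,i,j,k,hc,heq⟩ := hadj
  have heq' : ((starRingEnd ℂ) ⟪g,f⟫) • Ee (vv f g false) (vv f g true)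
      = Mon f g i j k • Ee (vv f g a) (vv f g b) := heq
  rcases NP hff hf0 hg0 hd _ _ _ _ _ _ heq' with ⟨h1, _⟩ | ⟨ha, hb, hm⟩
  · exact absurd (by simpa using congrArg (starRingEnd ℂ) h1) hL0
  · refine ⟨i, j, k, hc.1, ?_, hm⟩
    have := hc.2
    rw [← ha, ← hb] at this
    simpa [cndJ1] using this
@[simp] lemma e1_diag (a : Bool) : e1 a a = 0 := by rcases a <;> rfl
@[simp] lemma e2_diag (a : Bool) : e2 a a = 0 := by rcases a <;> rfl

lemma Mon_congr (f g : H) {i j k i' j' k' : ℕ} (h1 : i = i') (h2 : j = j') (h3 : k = k') :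
    Mon f g i j k = Mon f g i' j' k' := by rw [h1, h2, h3]

lemma hMinv (f g : H)
    (hLi : ∃ a b c, Mon f g 1 0 0 * Mon f g a b c = 1)
    (hCi : ∃ a b c, Mon f g 0 1 0 * Mon f g a b c = 1)
    (hNi : ∃ a b c, Mon f g 0 0 1 * Mon f g a b c = 1) :
    ∀ i j k, ∃ a b c, Mon f g i j k * Mon f g a b c = 1 := by
  obtain ⟨la, lb, lc, hl⟩ := hLi
  obtain ⟨ca, cb, cc, hc⟩ := hCi
  obtain ⟨na, nb, nc, hn⟩ := hNi
  intro i j k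
  induction i with
  | zero =>
    induction j with
    | zero =>
      induction k with
      | zero => exact ⟨0, 0, 0, by rw [Mon_zero, one_mul]⟩
      | succ n ih =>
        obtain ⟨a, b, c, h⟩ := ih
        refine ⟨a + na, b + nb, c + nc, ?_⟩
        have : Mon f g 0 0 (n+1) * Mon f g (a+na) (b+nb) (c+nc) =
            (Mon f g 0 0 n * Mon f g a b c) * (Mon f g 0 0 1 * Mon f g na nb nc) := by
          rw [Mon_mul, Mon_mul, Mon_mul, Mon_mul]
          exact Mon_congr f g (by omega) (by omega) (by omega)
        rw [this, h, hn, one_mul]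
    | succ n ih =>
      obtain ⟨a, b, c, h⟩ := ih
      refine ⟨a + ca, b + cb, c + cc, ?_⟩
      have : Mon f g 0 (n+1) k * Mon f g (a+ca) (b+cb) (c+cc) =
          (Mon f g 0 n k * Mon f g a b c) * (Mon f g 0 1 0 * Mon f g ca cb cc) := by
        rw [Mon_mul, Mon_mul, Mon_mul, Mon_mul]
        exact Mon_congr f g (by omega) (by omega) (by omega)
      rw [this, h, hc, one_mul]
  | succ n ih =>
    obtain ⟨a, b, c, h⟩ := ih
    refine ⟨a + la, b + lb, c + lc, ?_⟩
    have : Mon f g (n+1) j k * Mon f g (a+la) (b+lb) (c+lc) =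
        (Mon f g n j k * Mon f g a b c) * (Mon f g 1 0 0 * Mon f g la lb lc) := by
      rw [Mon_mul, Mon_mul, Mon_mul, Mon_mul]
      exact Mon_congr f g (by omega) (by omega) (by omega)
    rw [this, h, hl, one_mul]

lemma simple_of_solve (f g : H) (hff : ⟪f,f⟫ = (1:ℂ)) (hf0 : f ≠ 0) (hg0 : g ≠ 0)
    (hsolve : ∀ i j k, Mon f g i j k ≠ 0 → ∀ i' j' k' (e : ℕ),
      ∃ p q r p' q' r', 1 ≤ r ∧ 1 ≤ r' ∧
        Mon f g (p + i + p') (q + j + q') (r + k + (r' + e)) = Mon f g i' j' k') :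
    IsSimpleSemigroup (genSG (Ee f g)) := by
  have hgen := genSG_eq_SS f g hff
  intro J hJ ⟨Z, hZJ, hZ0⟩
  rw [hgen] at hJ
  obtain ⟨a, b, i, j, k, hc, rfl⟩ := hJ.1 hZJ
  have hs0 : Mon f g i j k ≠ 0 := by
    intro h; rw [h, zero_smul] at hZ0; exact hZ0 rfl
  rw [hgen]
  apply Set.Subset.antisymm (hgen ▸ hJ.1)
  rintro x ⟨c, d, i', j', k', hc', rfl⟩
  obtain ⟨p, q, r, p', q', r', hr, hr', heq⟩ :=
    hsolve i j k hs0 i' j' k' (e3 a a + e3 b b)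
  have hX : Mon f g p q r • Ee (vv f g c) (vv f g a) ∈ SS f g :=
    ⟨c, a, p, q, r, cndS_of_pos c a hr, rfl⟩
  have hY : Mon f g p' q' r' • Ee (vv f g b) (vv f g d) ∈ SS f g :=
    ⟨b, d, p', q', r', cndS_of_pos b d hr', rfl⟩
  have hXZ := (hJ.2 _ hZJ _ hX).1
  have hXZY := (hJ.2 _ hXZ _ hY).2
  have hcalc : (Mon f g p q r • Ee (vv f g c) (vv f g a)) *
      (Mon f g i j k • Ee (vv f g a) (vv f g b)) *
      (Mon f g p' q' r' • Ee (vv f g b) (vv f g d)) =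
      Mon f g i' j' k' • Ee (vv f g c) (vv f g d) := by
    rw [prodEE f g hff, prodEE f g hff]
    rw [Mon_congr f g (i' := p + i + p') (j' := q + j + q')
      (k' := r + k + (r' + (e3 a a + e3 b b)))
      (by simp only [e1_diag, e2_diag]; omega) (by simp only [e1_diag, e2_diag]; omega)
      (by omega), heq]
  rw [← hcalc]
  exact hXZY
lemma solve_of_inv (f g : H)
    (hLi : ∃ a b c, Mon f g 1 0 0 * Mon f g a b c = 1)
    (hCi : ∃ a b c, Mon f g 0 1 0 * Mon f g a b c = 1)
    (hNi : ∃ a b c, Mon f g 0 0 1 * Mon f g a b c = 1) :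
    ∀ i j k, Mon f g i j k ≠ 0 → ∀ i' j' k' (e : ℕ),
      ∃ p q r p' q' r', 1 ≤ r ∧ 1 ≤ r' ∧
        Mon f g (p + i + p') (q + j + q') (r + k + (r' + e)) = Mon f g i' j' k' := by
  intro i j k _ i' j' k' e
  obtain ⟨A, B, C, hinv⟩ := hMinv f g hLi hCi hNi i j k
  obtain ⟨na, nb, nc, hn⟩ := hNi
  refine ⟨A + i' + (e+1)*na, B + j' + (e+1)*nb, C + k' + (e+1)*nc + 1, na, nb, nc + 1,
    by omega, by omega, ?_⟩
  have Mon_pow : ∀ (a b c n : ℕ), (Mon f g a b c)^n = Mon f g (a*n) (b*n) (c*n) := by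
    intro a b c n
    simp only [Mon, mul_pow, ← pow_mul]
  have key : Mon f g ((A + i' + (e+1)*na) + i + na) ((B + j' + (e+1)*nb) + j + nb)
      ((C + k' + (e+1)*nc + 1) + k + ((nc + 1) + e)) =
      (Mon f g i j k * Mon f g A B C) * Mon f g i' j' k' *
        (Mon f g 0 0 1 * Mon f g na nb nc)^(e+2) := by
    have h1 : Mon f g 0 0 1 * Mon f g na nb nc = Mon f g na nb (nc+1) := by
      rw [Mon_mul]; exact Mon_congr f g (by omega) (by omega) (by omega)
    rw [h1, Mon_pow, Mon_mul, Mon_mul, Mon_mul]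
    exact Mon_congr f g (by ring) (by ring) (by ring)
  rw [key, hinv, hn, one_pow, one_mul, mul_one]

lemma Mon_L_zero (f g : H) (hL0 : ⟪g,f⟫ = (0:ℂ)) {i j k : ℕ} (h : 1 ≤ i ∨ 1 ≤ j) :
    Mon f g i j k = 0 := by
  rcases h with h | h
  · simp [Mon, hL0, zero_pow (by omega : i ≠ 0)]
  · simp [Mon, hL0, zero_pow (by omega : j ≠ 0)]

lemma solve_degenerate (f g : H) (hL0 : ⟪g,f⟫ = (0:ℂ)) (hN1 : ⟪g,g⟫ = (1:ℂ)) :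
    ∀ i j k, Mon f g i j k ≠ 0 → ∀ i' j' k' (e : ℕ),
      ∃ p q r p' q' r', 1 ≤ r ∧ 1 ≤ r' ∧
        Mon f g (p + i + p') (q + j + q') (r + k + (r' + e)) = Mon f g i' j' k' := by
  intro i j k hs i' j' k' e
  have hi : i = 0 := by
    by_contra hi
    exact hs (Mon_L_zero f g hL0 (Or.inl (by omega)))
  have hj : j = 0 := by
    by_contra hj
    exact hs (Mon_L_zero f g hL0 (Or.inr (by omega)))
  subst hi; subst hj
  refine ⟨i', j', 1, 0, 0, 1, le_refl 1, le_refl 1, ?_⟩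
  simp [Mon, hN1, -inner_self_eq_norm_sq_to_K]

lemma MonN1 (f g : H) (hN1 : ⟪g,g⟫ = (1:ℂ)) (i j k k' : ℕ) :
    Mon f g i j k = Mon f g i j k' := by simp [Mon, hN1, -inner_self_eq_norm_sq_to_K]

lemma Mon_real (f g : H) (hLre : (starRingEnd ℂ) ⟪g,f⟫ = ⟪g,f⟫) (i j k : ℕ) :
    Mon f g i j k = Mon f g (i+j) 0 k := by
  simp only [Mon, hLre, pow_add, pow_zero]
  ring

lemma SI_of (f g : H) (hff : ⟪f,f⟫ = (1:ℂ))
    (hLre : (starRingEnd ℂ) ⟪g,f⟫ = ⟪g,f⟫) (hN1 : ⟪g,g⟫ = (1:ℂ)) :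
    IsSI (genSG (Ee f g)) := by
  have hgen := genSG_eq_SS f g hff
  intro J hJ Z hZJ
  have hJS := hJ.1
  rw [hgen] at hJS
  obtain ⟨a, b, i, j, k, hc, rfl⟩ := hJS hZJ
  have hX : Mon f g 0 0 1 • Ee (vv f g b) (vv f g a) ∈ genSG (Ee f g) := by
    rw [hgen]; exact ⟨b, a, 0, 0, 1, cndS_of_pos b a (le_refl 1), rfl⟩
  have hXZ := (hJ.2 _ hZJ _ hX).1
  have hXZY := (hJ.2 _ hXZ _ hX).2
  have hcalc : (Mon f g 0 0 1 • Ee (vv f g b) (vv f g a)) *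
      (Mon f g i j k • Ee (vv f g a) (vv f g b)) *
      (Mon f g 0 0 1 • Ee (vv f g b) (vv f g a)) =
      Mon f g j i k • Ee (vv f g b) (vv f g a) := by
    rw [prodEE f g hff, prodEE f g hff]
    simp only [e1_diag, e2_diag, add_zero, zero_add]
    congr 1
    simp only [Mon, hLre, hN1, one_pow, mul_one]
    ring
  rw [adjoint_smul, Ee_adjoint, Mon_conj]
  rcases a <;> rcases b <;> (rw [← hcalc]; exact hXZY)

lemma pow_eq_one_nn {r : ℝ} (h0 : 0 ≤ r) {m : ℕ} (hm : 1 ≤ m) (h : r^m = 1) : r = 1 := by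
  rcases lt_trichotomy r 1 with hr | hr | hr
  · have := pow_lt_one₀ h0 hr (by omega : m ≠ 0)
    rw [h] at this; exact absurd this (lt_irrefl 1)
  · exact hr
  · have := one_lt_pow₀ hr (by omega : m ≠ 0)
    rw [h] at this; exact absurd this (lt_irrefl 1)

lemma L_pm_one (L : ℂ) (hLre : (starRingEnd ℂ) L = L) (habs : ‖L‖ = 1) :
    L = 1 ∨ L = -1 := by
  have h2 : L * L = 1 := by
    nth_rewrite 2 [← hLre]
    rw [Complex.mul_conj]
    rw [Complex.normSq_eq_norm_sq, habs]
    norm_num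
  have : (L - 1) * (L + 1) = 0 := by linear_combination h2
  rcases mul_eq_zero.mp this with h | h
  · left; linear_combination h
  · right; linear_combination h

lemma nonsimple_of (f g : H) (hff : ⟪f,f⟫ = (1:ℂ)) (hf0 : f ≠ 0) (hg0 : g ≠ 0)
    (hd : ⟪g,g⟫ - ⟪f,g⟫ * ⟪g,f⟫ ≠ 0)
    (hLre : (starRingEnd ℂ) ⟪g,f⟫ = ⟪g,f⟫) (hN1 : ⟪g,g⟫ = (1:ℂ))
    (hL0 : ⟪g,f⟫ ≠ (0:ℂ)) (hL1 : ⟪g,f⟫ ≠ (1:ℂ)) (hLm1 : ⟪g,f⟫ ≠ (-1:ℂ)) :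
    ¬ IsSimpleSemigroup (genSG (Ee f g)) := by
  have hgen := genSG_eq_SS f g hff
  intro hsimp
  set Jrev : Set (H →L[ℂ] H) :=
    {x | ∃ a b i j k, 1 ≤ i + j ∧ x = Mon f g i j k • Ee (vv f g a) (vv f g b)} with hJrev
  have hsub : Jrev ⊆ genSG (Ee f g) := by
    rw [hgen]
    rintro x ⟨a, b, i, j, k, hij, rfl⟩
    rcases a <;> rcases b
    · exact ⟨false, false, i, j, k, by simp [cndS], rfl⟩
    · exact ⟨false, true, 0, i+j, k, by simp [cndS], by
        rw [Mon_real f g hLre]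
        rw [show Mon f g (i+j) 0 k = Mon f g 0 (i+j) k by simp only [Mon, hLre, pow_zero]; ring]⟩
    · exact ⟨true, false, i+j, 0, k, by simp [cndS], by rw [Mon_real f g hLre]⟩
    · exact ⟨true, true, i, j, k+1, by simp [cndS], by rw [MonN1 f g hN1 i j k (k+1)]⟩
  have hideal : IsSemigroupIdeal (genSG (Ee f g)) Jrev := by
    refine ⟨hsub, ?_⟩
    rintro Z ⟨a, b, i, j, k, hij, rfl⟩ X hX
    rw [hgen] at hX
    obtain ⟨c, d, i', j', k', hc', rfl⟩ := hX
    constructor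
    · rw [prodEE f g hff]
      exact ⟨c, b, _, _, _, by have := e1 d a; omega, rfl⟩
    · rw [prodEE f g hff]
      exact ⟨a, d, _, _, _, by omega, rfl⟩
  have hmem : Mon f g 1 0 0 • Ee (vv f g true) (vv f g false) ∈ Jrev :=
    ⟨true, false, 1, 0, 0, by omega, rfl⟩
  have hne : Mon f g 1 0 0 • Ee (vv f g true) (vv f g false) ≠ 0 := by
    rw [Mon100]
    simp only [vv_true, vv_false]
    intro h
    rcases smul_eq_zero.mp h with h | h
    · exact hL0 h
    · exact Ee_ne_zero hf0 hg0 h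
  have heq := hsimp Jrev hideal ⟨_, hmem, hne⟩
  have hTmem : Ee f g ∈ Jrev := by
    rw [heq, hgen]; exact T_mem_SS f g
  obtain ⟨a, b, i, j, k, hij, hT⟩ := hTmem
  have hT' : (1:ℂ) • Ee (vv f g true) (vv f g false) = Mon f g i j k • Ee (vv f g a) (vv f g b) := by
    rw [one_smul]; exact hT
  rcases NP hff hf0 hg0 hd _ _ _ _ _ _ hT' with ⟨h1, _⟩ | ⟨_, _, hm⟩
  · exact one_ne_zero h1
  · have hval : (1:ℂ) = ⟪g,f⟫^(i+j) := by
      rw [hm, Mon_real f g hLre, MonN1 f g hN1 (i+j) 0 k 0]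
      simp [Mon]
    have habs : ‖⟪g,f⟫‖ = 1 := by
      have := congrArg (‖·‖) hval
      rw [norm_pow, norm_one] at this
      exact pow_eq_one_nn (norm_nonneg _) hij this.symm
    rcases L_pm_one ⟪g,f⟫ hLre habs with h | h
    · exact hL1 h
    · exact hLm1 h
lemma Pff_mul (f : H) (hff : ⟪f,f⟫ = (1:ℂ)) (x y : ℂ) :
    (x • Ee f f) * (y • Ee f f) = (x*y) • Ee f f := by
  rw [smul_mul_assoc, mul_smul_comm, Ee_mul, hff, one_smul, smul_smul]

lemma normalEfg (f g : H) (c : ℂ) (hgc : g = c • f) :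
    Ee f g = ((starRingEnd ℂ) c) • Ee f f := by
  ext x
  simp [Ee_apply, hgc, inner_smul_left, smul_smul, mul_comm]

lemma normalEgf (f g : H) (c : ℂ) (hgc : g = c • f) : Ee g f = c • Ee f f := by
  ext x
  simp [Ee_apply, hgc, smul_smul, mul_comm, smul_comm]

lemma normalEgg (f g : H) (c : ℂ) (hgc : g = c • f) :
    Ee g g = ((starRingEnd ℂ) c * c) • Ee f f := by
  ext x
  simp [Ee_apply, hgc, inner_smul_left, smul_smul, smul_comm]
  congr 1
  ring

lemma normalGF (f g : H) (hff : ⟪f,f⟫ = (1:ℂ)) (c : ℂ) (hgc : g = c • f) :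
    ⟪g,f⟫ = (starRingEnd ℂ) c := by
  rw [hgc, inner_smul_left, hff, mul_one]

lemma normalGG (f g : H) (hff : ⟪f,f⟫ = (1:ℂ)) (c : ℂ) (hgc : g = c • f) :
    ⟪g,g⟫ = (starRingEnd ℂ) c * c := by
  nth_rewrite 1 [hgc]
  rw [hgc, inner_smul_left, inner_smul_right, hff, mul_one]

lemma normalSSnf (f g : H) (hff : ⟪f,f⟫ = (1:ℂ)) (c : ℂ) (hgc : g = c • f) :
    ∀ x ∈ SS f g, ∃ I J : ℕ, 1 ≤ I + J ∧ x = ((starRingEnd ℂ) c ^ I * c ^ J) • Ee f f := by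
  rintro x ⟨a, b, i, j, k, hc, rfl⟩
  have hgf := normalGF f g hff c hgc
  have hgg := normalGG f g hff c hgc
  have hMon : Mon f g i j k = (starRingEnd ℂ) c ^ i * c ^ j * ((starRingEnd ℂ) c * c) ^ k := by
    simp [Mon, hgf, hgg, Complex.conj_conj, -inner_self_eq_norm_sq_to_K]
  rcases a <;> rcases b <;> simp only [vv_true, vv_false]
  · -- (false,false) : Ee g g
    refine ⟨i+k+1, j+k+1, by omega, ?_⟩
    rw [normalEgg f g c hgc, smul_smul, hMon]
    congr 1
    simp only [pow_add, mul_pow, pow_succ, pow_one]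
    ring
  · -- (false,true) : Ee g f
    refine ⟨i+k, j+k+1, by omega, ?_⟩
    rw [normalEgf f g c hgc, smul_smul, hMon]
    congr 1
    simp only [pow_add, mul_pow, pow_succ, pow_one]
    ring
  · -- (true,false) : Ee f g
    refine ⟨i+k+1, j+k, by omega, ?_⟩
    rw [normalEfg f g c hgc, smul_smul, hMon]
    congr 1
    simp only [pow_add, mul_pow, pow_succ, pow_one]
    ring
  · -- (true,true) : Ee f f, k ≥ 1
    have hk : 1 ≤ k := by simpa [cndS] using hc
    refine ⟨i+k, j+k, by omega, ?_⟩
    rw [hMon]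
    congr 1
    simp only [pow_add, mul_pow]
    ring

lemma normalSP_mem (f g : H) (hff : ⟪f,f⟫ = (1:ℂ)) (c : ℂ) (hgc : g = c • f) :
    ∀ I J : ℕ, 1 ≤ I + J → ((starRingEnd ℂ) c ^ I * c ^ J) • Ee f f ∈ SS f g := by
  have hgf := normalGF f g hff c hgc
  intro I J hIJ
  rcases I with _ | I'
  · rcases J with _ | J'
    · omega
    · refine ⟨false, true, 0, J', 0, by simp [cndS], ?_⟩
      simp only [vv_true, vv_false]
      rw [normalEgf f g c hgc, smul_smul]
      congr 1
      simp [Mon, hgf, Complex.conj_conj, pow_succ]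
  · rcases J with _ | J'
    · refine ⟨true, false, I', 0, 0, by simp [cndS], ?_⟩
      simp only [vv_true, vv_false]
      rw [normalEfg f g c hgc, smul_smul]
      congr 1
      simp [Mon, hgf, pow_succ]
    · refine ⟨false, false, I', J', 0, by simp [cndS], ?_⟩
      simp only [vv_true, vv_false]
      rw [normalEgg f g c hgc, smul_smul]
      congr 1
      simp [Mon, hgf, Complex.conj_conj, pow_succ]
      ring

lemma normal_notSI (f g : H) (hff : ⟪f,f⟫ = (1:ℂ)) (hf0 : f ≠ 0) (c : ℂ)
    (hgc : g = c • f) (hc0 : c ≠ 0) (hcc : (starRingEnd ℂ) c ≠ c)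
    (hrc : c * (starRingEnd ℂ) c ≠ 1) : ¬ IsSI (genSG (Ee f g)) := by
  intro hSI
  have hgen := genSG_eq_SS f g hff
  set cc := (starRingEnd ℂ) c with hccdef
  set Jn : Set (H →L[ℂ] H) := {x | ∃ I J : ℕ, 1 ≤ I ∧ x = (cc ^ I * c ^ J) • Ee f f}
    with hJn
  have hideal : IsSemigroupIdeal (genSG (Ee f g)) Jn := by
    constructor
    · rintro x ⟨I, J, hI, rfl⟩
      rw [hgen]
      exact normalSP_mem f g hff c hgc I J (by omega)
    · rintro Z ⟨I, J, hI, rfl⟩ X hX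
      rw [hgen] at hX
      obtain ⟨A, B, hAB, hXv⟩ := normalSSnf f g hff c hgc X hX
      constructor
      · rw [hXv, Pff_mul f hff]
        exact ⟨A + I, B + J, by omega, by rw [pow_add, pow_add, hccdef]; ring_nf⟩
      · rw [hXv, Pff_mul f hff]
        exact ⟨I + A, J + B, by omega, by rw [pow_add, pow_add, hccdef]; ring_nf⟩
  have hTJn : Ee f g ∈ Jn := by
    refine ⟨1, 0, le_refl 1, ?_⟩
    rw [normalEfg f g c hgc]
    norm_num
    rfl
  have hadj := hSI Jn hideal (Ee f g) hTJn
  rw [Ee_adjoint] at hadj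
  obtain ⟨I, J, hI, hv⟩ := hadj
  rw [normalEgf f g c hgc] at hv
  have hceq : c = cc ^ I * c ^ J := smul_Ee_cancel hf0 hf0 hv
  -- numeric contradiction
  rcases Nat.lt_or_ge (I + J) 2 with hIJ | hIJ
  · have hI1 : I = 1 ∧ J = 0 := by omega
    rw [hI1.1, hI1.2] at hceq
    simp at hceq
    exact hcc hceq.symm
  · have habs := congrArg (‖·‖) hceq
    rw [norm_mul, norm_pow, norm_pow, hccdef, Complex.norm_conj, ← pow_add] at habs
    have hr0 : ‖c‖ ≠ 0 := by simpa using hc0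
    have hr1 : ‖c‖ ^ (I + J - 1) = 1 := by
      have h1 : ‖c‖ ^ (I + J - 1) * ‖c‖ = 1 * ‖c‖ := by
        rw [one_mul, ← pow_succ]
        have : I + J - 1 + 1 = I + J := by omega
        rw [this, ← habs]
      exact mul_right_cancel₀ hr0 h1
    have := pow_eq_one_nn (norm_nonneg _) (by omega : 1 ≤ I + J - 1) hr1
    apply hrc
    rw [Complex.mul_conj, Complex.normSq_eq_norm_sq, this]
    norm_num

lemma normal_simple (f g : H) (hff : ⟪f,f⟫ = (1:ℂ)) (c : ℂ)
    (hgc : g = c • f) (hrc : c * (starRingEnd ℂ) c = 1) :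
    IsSimpleSemigroup (genSG (Ee f g)) := by
  have hgen := genSG_eq_SS f g hff
  set cc := (starRingEnd ℂ) c with hccdef
  intro J hJ ⟨Z, hZJ, hZ0⟩
  obtain ⟨I, J', h1, hZv⟩ := normalSSnf f g hff c hgc Z (hgen ▸ hJ.1 hZJ)
  apply Set.Subset.antisymm hJ.1
  intro x hx
  obtain ⟨A, B, hAB, hxv⟩ := normalSSnf f g hff c hgc x (hgen ▸ hx)
  have hX : ((cc ^ (A + J' + 1) * c ^ (B + I + 1)) • Ee f f) ∈ genSG (Ee f g) := by
    rw [hgen]; exact normalSP_mem f g hff c hgc _ _ (by omega)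
  have hXZ := (hJ.2 Z hZJ _ hX).1
  have hcalc : ((cc ^ (A + J' + 1) * c ^ (B + I + 1)) • Ee f f) * Z = x := by
    rw [hZv, hxv, Pff_mul f hff]
    congr 1
    have h2 : (cc * c) ^ (I + J' + 1) = 1 := by
      rw [mul_comm, hrc, one_pow]
    calc cc ^ (A + J' + 1) * c ^ (B + I + 1) * (cc ^ I * c ^ J')
        = cc ^ A * c ^ B * (cc * c) ^ (I + J' + 1) := by
          simp only [pow_add, mul_pow, pow_succ, pow_one]
          ring
      _ = cc ^ A * c ^ B := by rw [h2, mul_one]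
  rw [← hcalc]
  exact hXZ
lemma exists_g (T : H →L[ℂ] H) (f : H) (hf : ‖f‖ = 1)
    (hrange : LinearMap.range (T : H →ₗ[ℂ] H) = Submodule.span ℂ {f}) : ∃ g : H, T = Ee f g := by
  have hff : ⟪f,f⟫ = (1:ℂ) := by rw [inner_self_eq_norm_sq_to_K, hf]; norm_num
  refine ⟨adjoint T f, ?_⟩
  ext x
  have hx : T x ∈ LinearMap.range (T : H →ₗ[ℂ] H) := ⟨x, rfl⟩
  rw [hrange] at hx
  obtain ⟨cx, hcx⟩ := Submodule.mem_span_singleton.mp hx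
  have h1 : ⟪f, T x⟫ = cx := by rw [← hcx, inner_smul_right, hff, mul_one]
  rw [Ee_apply, ContinuousLinearMap.adjoint_inner_left, h1, ← hcx]

lemma Ee_norm (f g : H) (hf : ‖f‖ = 1) : ‖Ee f g‖ = ‖g‖ := by
  apply le_antisymm
  · refine ContinuousLinearMap.opNorm_le_bound _ (norm_nonneg g) (fun x => ?_)
    rw [Ee_apply, norm_smul, hf]
    have := norm_inner_le_norm (𝕜 := ℂ) g x
    simpa using this
  · by_cases hg : g = 0
    · simp [hg]
    · have h1 := ContinuousLinearMap.le_opNorm (Ee f g) g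
      rw [Ee_apply, norm_smul, hf] at h1
      have h2 : ‖(⟪g,g⟫:ℂ)‖ = ‖g‖ * ‖g‖ := by
        rw [inner_self_eq_norm_sq_to_K, norm_pow]
        simp [Complex.norm_real, abs_of_nonneg (norm_nonneg g), sq]
      have hgpos : 0 < ‖g‖ := norm_pos_iff.mpr hg
      nlinarith [h1, h2]

lemma inner_Ee_tr (f g : H) (hff : ⟪f,f⟫ = (1:ℂ)) : ⟪f, Ee f g f⟫ = ⟪g,f⟫ := by
  rw [Ee_apply, inner_smul_right, hff, mul_one]

lemma hd_zero_normal (f g : H) (hff : ⟪f,f⟫ = (1:ℂ))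
    (hd0 : ⟪g,g⟫ - ⟪f,g⟫ * ⟪g,f⟫ = 0) : g = ⟪f,g⟫ • f := by
  have h : ⟪g - ⟪f,g⟫ • f, g - ⟪f,g⟫ • f⟫ = 0 := by
    simp only [inner_sub_left, inner_sub_right, inner_smul_left, inner_smul_right, hff,
      mul_one, inner_conj_symm]
    linear_combination hd0
  exact sub_eq_zero.mp (inner_self_eq_zero.mp h)

lemma normal_prod_eq (f g : H) (hff : ⟪f,f⟫ = (1:ℂ))
    (hd0 : ⟪g,g⟫ - ⟪f,g⟫ * ⟪g,f⟫ = 0) : Ee f g * Ee g f = Ee g f * Ee f g := by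
  have hgc := hd_zero_normal f g hff hd0
  rw [Ee_mul, Ee_mul, hff, one_smul, normalGG f g hff ⟪f,g⟫ hgc, normalEgg f g ⟪f,g⟫ hgc]

lemma nonnormal_prod_ne (f g : H) (hff : ⟪f,f⟫ = (1:ℂ)) (hg0 : g ≠ 0)
    (hd : ⟪g,g⟫ - ⟪f,g⟫ * ⟪g,f⟫ ≠ 0) : Ee f g * Ee g f ≠ Ee g f * Ee f g := by
  rw [Ee_mul, Ee_mul, hff, one_smul]
  intro h
  have hfu : ⟪f, g - ⟪f,g⟫ • f⟫ = 0 := by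
    simp [inner_sub_right, inner_smul_right, hff, -inner_self_eq_norm_sq_to_K]
  have hgu : ⟪g, g - ⟪f,g⟫ • f⟫ = ⟪g,g⟫ - ⟪f,g⟫ * ⟪g,f⟫ := by
    simp [inner_sub_right, inner_smul_right]
  have happ := congrArg (fun (A : H →L[ℂ] H) => A (g - ⟪f,g⟫ • f)) h
  simp only [ContinuousLinearMap.smul_apply, Ee_apply, hfu, hgu, smul_zero, zero_smul] at happ
  rcases smul_eq_zero.mp happ.symm with h' | h'
  · exact hd h'
  · exact hg0 h'

lemma inner_self_pow_one (g : H) {k : ℕ} (hk : 1 ≤ k) (h : (⟪g,g⟫:ℂ)^k = 1) :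
    ⟪g,g⟫ = (1:ℂ) := by
  rw [inner_self_eq_norm_sq_to_K] at h ⊢
  rw [← RCLike.ofReal_pow, ← RCLike.ofReal_pow, ← RCLike.ofReal_one (K := ℂ),
    RCLike.ofReal_inj] at h
  have h3 : ‖g‖ = 1 := by
    refine pow_eq_one_nn (norm_nonneg g) (by omega : 1 ≤ 2 * k) ?_
    rw [pow_mul]
    exact h
  rw [h3]
  norm_num

lemma norm_one_of_inner (g : H) (h : ⟪g,g⟫ = (1:ℂ)) : ‖g‖ = 1 := by
  rw [inner_self_eq_norm_sq_to_K, ← RCLike.ofReal_pow, ← RCLike.ofReal_one (K := ℂ),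
    RCLike.ofReal_inj] at h
  exact pow_eq_one_nn (norm_nonneg g) (by omega) h

lemma Mon_abs (f g : H) (i j k : ℕ) :
    ‖Mon f g i j k‖ =
      ‖⟪g,f⟫‖ ^ (i+j) * ‖⟪g,g⟫‖ ^ k := by
  simp only [Mon, norm_mul, norm_pow, Complex.norm_conj, pow_add]
/-- for `T` rank one nonselfadjoint, `S(T, T*)` is a nonsimple SI
semigroup iff `T` is non-normal, `tr T` is real with `tr T ∉ {0, 1, -1}`, and
`‖T‖ = 1`. -/
theorem stmt13 (T : H →L[ℂ] H) (hnsa : T ≠ adjoint T)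
    (f : H) (hf : ‖f‖ = 1)
    (hrange : LinearMap.range (T : H →ₗ[ℂ] H) = Submodule.span ℂ {f}) :
    (IsSI (genSG T) ∧ ¬ IsSimpleSemigroup (genSG T)) ↔
      (T * adjoint T ≠ adjoint T * T ∧
        (starRingEnd ℂ) ⟪f, T f⟫ = ⟪f, T f⟫ ∧
        ⟪f, T f⟫ ∉ ({0, 1, -1} : Set ℂ) ∧ ‖T‖ = 1) := by
  obtain ⟨g, rfl⟩ := exists_g T f hf hrange
  have hff : ⟪f,f⟫ = (1:ℂ) := by
    rw [inner_self_eq_norm_sq_to_K, hf]; norm_num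
  have hf0 : f ≠ 0 := by
    intro h; rw [h, norm_zero] at hf; exact zero_ne_one hf
  have hg0 : g ≠ 0 := by
    intro h
    have hfmem : f ∈ Submodule.span ℂ ({f} : Set H) := Submodule.mem_span_singleton_self f
    rw [← hrange] at hfmem
    obtain ⟨x, hx⟩ := hfmem
    rw [h] at hx
    have hz : (Ee f (0:H) : H →ₗ[ℂ] H) x = 0 := by simp [Ee_apply]
    rw [hz] at hx
    exact hf0 hx.symm
  rw [Ee_adjoint] at hnsa ⊢
  rw [inner_Ee_tr f g hff, Ee_norm f g hf]
  constructor
  · rintro ⟨hSI, hns⟩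
    have hd : ⟪g,g⟫ - ⟪f,g⟫ * ⟪g,f⟫ ≠ 0 := by
      intro hd0
      have hgc := hd_zero_normal f g hff hd0
      have hc0 : ⟪f,g⟫ ≠ (0:ℂ) := by
        intro h; rw [h, zero_smul] at hgc; exact hg0 hgc
      have hcc : (starRingEnd ℂ) ⟪f,g⟫ ≠ ⟪f,g⟫ := by
        intro h
        apply hnsa
        rw [normalEfg f g ⟪f,g⟫ hgc, normalEgf f g ⟪f,g⟫ hgc, h]
      by_cases hrc : ⟪f,g⟫ * (starRingEnd ℂ) ⟪f,g⟫ = 1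
      · exact hns (normal_simple f g hff ⟪f,g⟫ hgc hrc)
      · exact normal_notSI f g hff hf0 ⟪f,g⟫ hgc hc0 hcc hrc hSI
    obtain ⟨ia, ja, ka, hka, hA⟩ := condA f g hff hf0 hg0 hd hSI
    have hL0 : ⟪g,f⟫ ≠ (0:ℂ) := by
      intro hL
      have hia : ia = 0 := by
        by_contra hh
        rw [Mon_L_zero f g hL (Or.inl (by omega))] at hA
        exact zero_ne_one hA
      have hja : ja = 0 := by
        by_contra hh
        rw [Mon_L_zero f g hL (Or.inr (by omega))] at hA
        exact zero_ne_one hA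
      have hNk : (⟪g,g⟫:ℂ)^ka = 1 := by
        rw [hia, hja] at hA
        simpa [Mon] using hA
      have hN1 := inner_self_pow_one g hka hNk
      exact hns (simple_of_solve f g hff hf0 hg0 (solve_degenerate f g hL hN1))
    have hN1 : ⟪g,g⟫ = (1:ℂ) := by
      by_contra hN1
      have hAconj : Mon f g ja ia ka = 1 := by
        have hcj := congrArg (starRingEnd ℂ) hA
        rw [Mon_conj] at hcj
        simpa using hcj
      have hNi : ∃ a b c, Mon f g 0 0 1 * Mon f g a b c = 1 := by
        refine ⟨ia, ja, ka - 1, ?_⟩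
        rw [Mon_mul]
        have e : Mon f g (0+ia) (0+ja) (1+(ka-1)) = Mon f g ia ja ka :=
          Mon_congr f g (by omega) (by omega) (by omega)
        rw [e]; exact hA
      rcases Nat.lt_or_ge ia 1 with hia | hia
      · have hja : 1 ≤ ja := by
          by_contra hh
          have hia0 : ia = 0 := by omega
          have hja0 : ja = 0 := by omega
          rw [hia0, hja0] at hA
          have hNk : (⟪g,g⟫:ℂ)^ka = 1 := by simpa [Mon] using hA
          exact hN1 (inner_self_pow_one g hka hNk)
        have hLi : ∃ a b c, Mon f g 1 0 0 * Mon f g a b c = 1 := by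
          refine ⟨ja - 1, ia, ka, ?_⟩
          rw [Mon_mul]
          have e : Mon f g (1+(ja-1)) (0+ia) (0+ka) = Mon f g ja ia ka :=
            Mon_congr f g (by omega) (by omega) (by omega)
          rw [e]; exact hAconj
        have hCi : ∃ a b c, Mon f g 0 1 0 * Mon f g a b c = 1 := by
          refine ⟨ia, ja - 1, ka, ?_⟩
          rw [Mon_mul]
          have e : Mon f g (0+ia) (1+(ja-1)) (0+ka) = Mon f g ia ja ka :=
            Mon_congr f g (by omega) (by omega) (by omega)
          rw [e]; exact hA
        exact hns (simple_of_solve f g hff hf0 hg0 (solve_of_inv f g hLi hCi hNi))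
      · have hLi : ∃ a b c, Mon f g 1 0 0 * Mon f g a b c = 1 := by
          refine ⟨ia - 1, ja, ka, ?_⟩
          rw [Mon_mul]
          have e : Mon f g (1+(ia-1)) (0+ja) (0+ka) = Mon f g ia ja ka :=
            Mon_congr f g (by omega) (by omega) (by omega)
          rw [e]; exact hA
        have hCi : ∃ a b c, Mon f g 0 1 0 * Mon f g a b c = 1 := by
          refine ⟨ja, ia - 1, ka, ?_⟩
          rw [Mon_mul]
          have e : Mon f g (0+ja) (1+(ia-1)) (0+ka) = Mon f g ja ia ka :=
            Mon_congr f g (by omega) (by omega) (by omega)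
          rw [e]; exact hAconj
        exact hns (simple_of_solve f g hff hf0 hg0 (solve_of_inv f g hLi hCi hNi))
    have hLL : ⟪g,f⟫ * (starRingEnd ℂ) ⟪g,f⟫ ≠ 1 := by
      intro hLL1
      have hLi : ∃ a b c, Mon f g 1 0 0 * Mon f g a b c = 1 :=
        ⟨0, 1, 0, by rw [Mon100, Mon010]; exact hLL1⟩
      have hCi : ∃ a b c, Mon f g 0 1 0 * Mon f g a b c = 1 :=
        ⟨1, 0, 0, by rw [Mon010, Mon100, mul_comm]; exact hLL1⟩
      have hNi : ∃ a b c, Mon f g 0 0 1 * Mon f g a b c = 1 :=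
        ⟨0, 0, 0, by rw [Mon001, Mon_zero, mul_one]; exact hN1⟩
      exact hns (simple_of_solve f g hff hf0 hg0 (solve_of_inv f g hLi hCi hNi))
    have hLre : (starRingEnd ℂ) ⟪g,f⟫ = ⟪g,f⟫ := by
      obtain ⟨ib, jb, kb, hib, hkb, hB⟩ := condB f g hff hf0 hg0 hd hSI hL0
      rcases Nat.lt_or_ge (ib + jb) 2 with hij2 | hij2
      · have hib1 : ib = 1 ∧ jb = 0 := by omega
        rw [hB, hib1.1, hib1.2]
        simp [Mon, hN1, -inner_self_eq_norm_sq_to_K]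
      · exfalso
        have habs := congrArg (‖·‖) hB
        rw [Mon_abs, Complex.norm_conj] at habs
        have hNabs : ‖⟪g,g⟫‖ = 1 := by rw [hN1, norm_one]
        rw [hNabs, one_pow, mul_one] at habs
        have hr0 : ‖⟪g,f⟫‖ ≠ 0 := by simpa using hL0
        have h1 : ‖⟪g,f⟫‖ ^ (ib+jb-1) = 1 := by
          have h2 : ‖⟪g,f⟫‖ ^ (ib+jb-1) * ‖⟪g,f⟫‖
              = 1 * ‖⟪g,f⟫‖ := by
            rw [one_mul, ← pow_succ]
            have e : ib+jb-1+1 = ib+jb := by omega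
            rw [e, ← habs]
          exact mul_right_cancel₀ hr0 h2
        have habs1 := pow_eq_one_nn (norm_nonneg _) (by omega : 1 ≤ ib+jb-1) h1
        apply hLL
        rw [Complex.mul_conj, Complex.normSq_eq_norm_sq, habs1]
        norm_num
    refine ⟨nonnormal_prod_ne f g hff hg0 hd, hLre, ?_, norm_one_of_inner g hN1⟩
    intro hmem
    simp only [Set.mem_insert_iff, Set.mem_singleton_iff] at hmem
    rcases hmem with h | h | h
    · exact hL0 h
    · apply hLL; rw [h]; simp
    · apply hLL; rw [h]; simp
  · rintro ⟨hnn, hLre, hLset, hnrm⟩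
    have hN1 : ⟪g,g⟫ = (1:ℂ) := by
      rw [inner_self_eq_norm_sq_to_K, hnrm]; norm_num
    have hd : ⟪g,g⟫ - ⟪f,g⟫ * ⟪g,f⟫ ≠ 0 := fun hd0 => hnn (normal_prod_eq f g hff hd0)
    simp only [Set.mem_insert_iff, Set.mem_singleton_iff, not_or] at hLset
    exact ⟨SI_of f g hff hLre hN1,
      nonsimple_of f g hff hf0 hg0 hd hLre hN1 hLset.1 hLset.2.1 hLset.2.2⟩
end

section
/- Let T be a rank one bounded operator on a complex Hilbert space H that is not normal (T T* ≠ T* T), is a partial isometry (T = T T* T), and has tr T ≠ 0. Then tr T is real if and only if the semigroup S(T, T*) generated by T and T* is a selfadjoint-ideal (SI) semigroup. -/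
open ContinuousLinearMap
open scoped ComplexInnerProductSpace

variable {H : Type*} [NormedAddCommGroup H] [InnerProductSpace ℂ H] [CompleteSpace H]

/-- for `T` rank one, non-normal, a partial isometry, with `tr T ≠ 0`:
`tr T` is real iff `S(T, T*)` is an SI semigroup. -/
theorem stmt14 (T : H →L[ℂ] H)
    (hnn : T * adjoint T ≠ adjoint T * T)
    (hpi : T = T * adjoint T * T)
    (f : H) (hf : ‖f‖ = 1)
    (hrange : LinearMap.range (T : H →ₗ[ℂ] H) = Submodule.span ℂ {f})
    (htr : ⟪f, T f⟫ ≠ 0) :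
    (starRingEnd ℂ) ⟪f, T f⟫ = ⟪f, T f⟫ ↔ IsSI (genSG T) := by
  obtain ⟨A, hAdef⟩ : ∃ A, adjoint T = A := ⟨_, rfl⟩
  rw [hAdef] at hnn hpi
  obtain ⟨l, hldef⟩ : ∃ l, ⟪f, T f⟫ = l := ⟨_, rfl⟩
  rw [hldef] at htr ⊢
  obtain ⟨c, hcdef⟩ : ∃ c, (starRingEnd ℂ) l = c := ⟨_, rfl⟩
  rw [hcdef]
  obtain ⟨g, hgdef⟩ : ∃ g, A f = g := ⟨_, rfl⟩
  have hstarT : star T = A := by rw [star_eq_adjoint, hAdef]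
  have hstarA : star A = T := by rw [← hAdef, ← star_eq_adjoint, star_star]
  have hf0 : f ≠ 0 := by intro h; rw [h] at hf; simp at hf
  have hff : ⟪f, f⟫ = 1 := by rw [inner_self_eq_norm_sq_to_K, hf]; norm_num
  have hT : ∀ x, T x = ⟪g, x⟫ • f := by
    intro x
    have hx : T x ∈ Submodule.span ℂ {f} := by rw [← hrange]; exact LinearMap.mem_range_self _ x
    obtain ⟨a, ha⟩ := Submodule.mem_span_singleton.mp hx
    have h2 : ⟪g, x⟫ = a := by
      rw [← hgdef, ← hAdef, adjoint_inner_left, ← ha, inner_smul_right, hff, mul_one]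
    rw [h2]; exact ha.symm
  have hgf : ⟪g, f⟫ = l := by rw [← hgdef, ← hAdef, adjoint_inner_left, hldef]
  have hTf : T f = l • f := by rw [hT f, hgf]
  have hA : ∀ x, A x = ⟪f, x⟫ • g := by
    intro x
    apply ext_inner_left ℂ
    intro v
    rw [← hAdef, adjoint_inner_right, hT v, inner_smul_left, inner_smul_right, inner_conj_symm]
    ring
  have hg0 : g ≠ 0 := by
    intro h
    apply htr
    rw [← hgf, h, inner_zero_left]
  have hs : ⟪g, g⟫ = 1 := by
    have hp : (T * A * T) g = T g := by rw [← hpi]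
    rw [ContinuousLinearMap.mul_apply, ContinuousLinearMap.mul_apply, hT g] at hp
    rw [map_smul, hgdef, map_smul, hT g, smul_smul] at hp
    have h2 := smul_left_injective ℂ hf0 hp
    have s0 : ⟪g, g⟫ ≠ 0 := inner_self_ne_zero.mpr hg0
    have h3 : ⟪g, g⟫ * ⟪g, g⟫ = ⟪g, g⟫ * 1 := by rw [mul_one]; exact h2
    exact mul_left_cancel₀ s0 h3
  have hgn : ‖g‖ = 1 := by
    have h := inner_self_eq_norm_sq (𝕜 := ℂ) g
    rw [hs] at h
    simp only [RCLike.one_re] at h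
    have h4 : (‖g‖ - 1) * (‖g‖ + 1) = 0 := by nlinarith
    rcases mul_eq_zero.mp h4 with h5 | h5
    · linarith
    · have := norm_nonneg g; linarith
  have hTA : ∀ x, (T * A) x = ⟪f, x⟫ • f := by
    intro x
    rw [ContinuousLinearMap.mul_apply, hA x, map_smul, hT g, hs, one_smul]
  have hAT : ∀ x, (A * T) x = ⟪g, x⟫ • g := by
    intro x
    rw [ContinuousLinearMap.mul_apply, hT x, map_smul, hgdef]
  have hpar : ∀ μ : ℂ, g ≠ μ • f := by
    intro μ hμ
    apply hnn
    have hμ1 : (starRingEnd ℂ) μ * μ = 1 := by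
      have h1 : ⟪g, g⟫ = (starRingEnd ℂ) μ * (μ * ⟪f, f⟫) := by
        rw [hμ, inner_smul_left, inner_smul_right]
      rw [hs, hff, mul_one] at h1
      exact h1.symm
    ext x
    rw [hTA x, hAT x, hμ, inner_smul_left, smul_smul]
    rw [show (starRingEnd ℂ) μ * ⟪f, x⟫ * μ = ((starRingEnd ℂ) μ * μ) * ⟪f, x⟫ by ring, hμ1,
      one_mul]
  have hT2 : T * T = l • T := by
    ext x
    rw [ContinuousLinearMap.mul_apply, smul_apply, hT x, map_smul, hTf, smul_smul, smul_smul, mul_comm]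
  have hfg : ⟪f, g⟫ = c := by rw [← inner_conj_symm, hgf, hcdef]
  have hA2 : A * A = c • A := by
    ext x
    rw [ContinuousLinearMap.mul_apply, smul_apply, hA x, map_smul, hA g, hfg, smul_smul, smul_smul, mul_comm]
  have hTAT : T * A * T = T := hpi.symm
  have hATA : A * T * A = A := by
    have h := congrArg star hpi
    rw [star_mul, star_mul, hstarT, hstarA] at h
    rw [mul_assoc]
    exact h.symm
  -- reduction table
  have i1 : T * (T * A) = l • (T * A) := by rw [← mul_assoc, hT2, smul_mul_assoc]
  have i2 : T * (A * T) = T := by rw [← mul_assoc]; exact hTAT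
  have i3 : A * (T * A) = A := by rw [← mul_assoc]; exact hATA
  have i4 : A * (A * T) = c • (A * T) := by rw [← mul_assoc, hA2, smul_mul_assoc]
  have i5 : (T * A) * A = c • (T * A) := by rw [mul_assoc, hA2, mul_smul_comm]
  have i6 : (T * A) * (T * A) = T * A := by rw [← mul_assoc, hTAT]
  have i7 : (T * A) * (A * T) = c • T := by rw [← mul_assoc, i5, smul_mul_assoc, hTAT]
  have i8 : (A * T) * T = l • (A * T) := by rw [mul_assoc, hT2, mul_smul_comm]
  have i9 : (A * T) * (T * A) = l • A := by rw [← mul_assoc, i8, smul_mul_assoc, hATA]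
  have i10 : (A * T) * (A * T) = A * T := by rw [← mul_assoc, hATA]
  have j1 : T * (A * (A * T)) = c • T := by rw [← mul_assoc]; exact i7
  have j2 : A * (T * (T * A)) = l • A := by rw [← mul_assoc]; exact i9
  have j3 : (T * A) * (T * (T * A)) = l • (T * A) := by rw [← mul_assoc, hTAT, i1]
  have j4 : (A * T) * (A * (A * T)) = c • (A * T) := by rw [← mul_assoc, hATA, i4]
  have htable : ∀ W₁, (W₁ = T ∨ W₁ = A ∨ W₁ = T * A ∨ W₁ = A * T) →
      ∀ W₂, (W₂ = T ∨ W₂ = A ∨ W₂ = T * A ∨ W₂ = A * T) →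
      ∃ e d : ℕ, ∃ W₃, (W₃ = T ∨ W₃ = A ∨ W₃ = T * A ∨ W₃ = A * T) ∧
        W₁ * W₂ = (l ^ e * c ^ d) • W₃ := by
    intro W₁ hW₁ W₂ hW₂
    rcases hW₁ with h1 | h1 | h1 | h1 <;> rcases hW₂ with h2 | h2 | h2 | h2 <;> rw [h1, h2]
    · exact ⟨1, 0, T, Or.inl rfl, by rw [hT2]; simp⟩
    · exact ⟨0, 0, T * A, Or.inr (Or.inr (Or.inl rfl)), by simp⟩
    · exact ⟨1, 0, T * A, Or.inr (Or.inr (Or.inl rfl)), by rw [i1]; simp⟩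
    · exact ⟨0, 0, T, Or.inl rfl, by rw [i2]; simp⟩
    · exact ⟨0, 0, A * T, Or.inr (Or.inr (Or.inr rfl)), by simp⟩
    · exact ⟨0, 1, A, Or.inr (Or.inl rfl), by rw [hA2]; simp⟩
    · exact ⟨0, 0, A, Or.inr (Or.inl rfl), by rw [i3]; simp⟩
    · exact ⟨0, 1, A * T, Or.inr (Or.inr (Or.inr rfl)), by rw [i4]; simp⟩
    · exact ⟨0, 0, T, Or.inl rfl, by rw [hTAT]; simp⟩
    · exact ⟨0, 1, T * A, Or.inr (Or.inr (Or.inl rfl)), by rw [i5]; simp⟩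
    · exact ⟨0, 0, T * A, Or.inr (Or.inr (Or.inl rfl)), by rw [i6]; simp⟩
    · exact ⟨0, 1, T, Or.inl rfl, by rw [i7]; simp⟩
    · exact ⟨1, 0, A * T, Or.inr (Or.inr (Or.inr rfl)), by rw [i8]; simp⟩
    · exact ⟨0, 0, A, Or.inr (Or.inl rfl), by rw [hATA]; simp⟩
    · exact ⟨1, 0, A, Or.inr (Or.inl rfl), by rw [i9]; simp⟩
    · exact ⟨0, 0, A * T, Or.inr (Or.inr (Or.inr rfl)), by rw [i10]; simp⟩
  have hGmem : ∀ Z : H →L[ℂ] H,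
      Z ∈ genSG T ↔ Z ∈ Subsemigroup.closure ({T, A} : Set (H →L[ℂ] H)) := by
    intro Z
    simp only [genSG, hAdef, SetLike.mem_coe]
  have hTG : T ∈ Subsemigroup.closure ({T, A} : Set (H →L[ℂ] H)) :=
    Subsemigroup.subset_closure (Set.mem_insert _ _)
  have hAG : A ∈ Subsemigroup.closure ({T, A} : Set (H →L[ℂ] H)) :=
    Subsemigroup.subset_closure (Set.mem_insert_of_mem _ rfl)
  have hstruct : ∀ Z, Z ∈ Subsemigroup.closure ({T, A} : Set (H →L[ℂ] H)) →
      ∃ a b : ℕ, ∃ W, (W = T ∨ W = A ∨ W = T * A ∨ W = A * T) ∧ Z = (l ^ a * c ^ b) • W := by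
    intro Z hZ
    induction hZ using Subsemigroup.closure_induction with
    | mem x hx =>
      simp only [Set.mem_insert_iff, Set.mem_singleton_iff] at hx
      rcases hx with h | h <;> rw [h]
      · exact ⟨0, 0, T, Or.inl rfl, by simp⟩
      · exact ⟨0, 0, A, Or.inr (Or.inl rfl), by simp⟩
    | mul x y hx hy ihx ihy =>
      obtain ⟨a1, b1, W1, hW1, rfl⟩ := ihx
      obtain ⟨a2, b2, W2, hW2, rfl⟩ := ihy
      obtain ⟨e, d, W3, hW3, he⟩ := htable W1 hW1 W2 hW2
      refine ⟨a1 + a2 + e, b1 + b2 + d, W3, hW3, ?_⟩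
      rw [smul_mul_smul_comm, he, smul_smul]
      congr 1
      ring
  have hmul : ∀ W, (W = T ∨ W = A ∨ W = T * A ∨ W = A * T) →
      ∃ XL XC, XL ∈ Subsemigroup.closure ({T, A} : Set (H →L[ℂ] H)) ∧
        XC ∈ Subsemigroup.closure ({T, A} : Set (H →L[ℂ] H)) ∧
        (∀ μ : ℂ, (μ • W) * XL = (μ * l) • W) ∧ (∀ μ : ℂ, (μ • W) * XC = (μ * c) • W) := by
    intro W hW
    rcases hW with h | h | h | h <;> rw [h]
    · exact ⟨T, A * (A * T), hTG, mul_mem hAG (mul_mem hAG hTG),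
        fun μ => by rw [smul_mul_assoc, hT2, smul_smul],
        fun μ => by rw [smul_mul_assoc, j1, smul_smul]⟩
    · exact ⟨T * (T * A), A, mul_mem hTG (mul_mem hTG hAG), hAG,
        fun μ => by rw [smul_mul_assoc, j2, smul_smul],
        fun μ => by rw [smul_mul_assoc, hA2, smul_smul]⟩
    · exact ⟨T * (T * A), A, mul_mem hTG (mul_mem hTG hAG), hAG,
        fun μ => by rw [smul_mul_assoc, j3, smul_smul],
        fun μ => by rw [smul_mul_assoc, i5, smul_smul]⟩
    · exact ⟨T, A * (A * T), hTG, mul_mem hAG (mul_mem hAG hTG),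
        fun μ => by rw [smul_mul_assoc, i8, smul_smul],
        fun μ => by rw [smul_mul_assoc, j4, smul_smul]⟩
  have hmemS : ∀ (a b : ℕ) W, (W = T ∨ W = A ∨ W = T * A ∨ W = A * T) →
      (l ^ a * c ^ b) • W ∈ Subsemigroup.closure ({T, A} : Set (H →L[ℂ] H)) := by
    intro a b W hW
    obtain ⟨XL, XC, hXL, hXC, hL, hC⟩ := hmul W hW
    have hWG : W ∈ Subsemigroup.closure ({T, A} : Set (H →L[ℂ] H)) := by
      rcases hW with h | h | h | h <;> rw [h]
      exacts [hTG, hAG, mul_mem hTG hAG, mul_mem hAG hTG]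
    induction a with
    | zero =>
      induction b with
      | zero => simpa using hWG
      | succ b ihb =>
        have h : (l ^ 0 * c ^ (b + 1)) • W = ((l ^ 0 * c ^ b) • W) * XC := by
          rw [hC]; congr 1; ring
        rw [h]; exact mul_mem ihb hXC
    | succ a iha =>
      have h : (l ^ (a + 1) * c ^ b) • W = ((l ^ a * c ^ b) • W) * XL := by
        rw [hL]; congr 1; ring
      rw [h]; exact mul_mem iha hXL
  constructor
  · -- tr T real → SI
    intro hlr J hJ Z hZ
    have hZG : Z ∈ Subsemigroup.closure ({T, A} : Set (H →L[ℂ] H)) := (hGmem Z).mp (hJ.1 hZ)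
    obtain ⟨a, b, W, hW, rfl⟩ := hstruct Z hZG
    have hAmem : A ∈ genSG T := (hGmem A).mpr hAG
    have hTmem : T ∈ genSG T := (hGmem T).mpr hTG
    have hc2 : (starRingEnd ℂ) c = l := by rw [← hcdef, starRingEnd_self_apply]
    have hconj : (starRingEnd ℂ) (l ^ a * c ^ b) = l ^ a * c ^ b := by
      rw [map_mul, map_pow, map_pow, hcdef, hc2, hlr]
    rcases hW with h | h | h | h <;> rw [h] at hZ ⊢
    · have key : adjoint ((l ^ a * c ^ b) • T) = (A * ((l ^ a * c ^ b) • T)) * A := by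
        rw [← star_eq_adjoint, star_smul, hstarT]
        simp only [RCLike.star_def]
        rw [hconj, mul_smul_comm, smul_mul_assoc, hATA]
      rw [key]
      exact (hJ.2 _ ((hJ.2 _ hZ A hAmem).1) A hAmem).2
    · have key : adjoint ((l ^ a * c ^ b) • A) = (T * ((l ^ a * c ^ b) • A)) * T := by
        rw [← star_eq_adjoint, star_smul, hstarA]
        simp only [RCLike.star_def]
        rw [hconj, mul_smul_comm, smul_mul_assoc, hTAT]
      rw [key]
      exact (hJ.2 _ ((hJ.2 _ hZ T hTmem).1) T hTmem).2
    · have key : adjoint ((l ^ a * c ^ b) • (T * A)) = (l ^ a * c ^ b) • (T * A) := by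
        rw [← star_eq_adjoint, star_smul]
        simp only [RCLike.star_def]
        rw [hconj, star_mul, hstarA, hstarT]
      rw [key]; exact hZ
    · have key : adjoint ((l ^ a * c ^ b) • (A * T)) = (l ^ a * c ^ b) • (A * T) := by
        rw [← star_eq_adjoint, star_smul]
        simp only [RCLike.star_def]
        rw [hconj, star_mul, hstarA, hstarT]
      rw [key]; exact hZ
  · -- SI → tr T real
    intro hSI
    by_contra hlr
    set Jset : Set (H →L[ℂ] H) :=
      {Z | ∃ a b : ℕ, ∃ W, (W = T ∨ W = A ∨ W = T * A ∨ W = A * T) ∧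
        Z = (l ^ (a + 1) * c ^ b) • W} with hJdef
    have hJI : IsSemigroupIdeal (genSG T) Jset := by
      constructor
      · rintro Z ⟨a, b, W, hW, rfl⟩
        exact (hGmem _).mpr (hmemS (a + 1) b W hW)
      · rintro Z ⟨a, b, W, hW, rfl⟩ X hX
        obtain ⟨a2, b2, W2, hW2, rfl⟩ := hstruct X ((hGmem X).mp hX)
        constructor
        · obtain ⟨e, d, W3, hW3, he⟩ := htable W2 hW2 W hW
          refine ⟨a2 + a + e, b2 + b + d, W3, hW3, ?_⟩
          rw [smul_mul_smul_comm, he, smul_smul]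
          congr 1; ring
        · obtain ⟨e, d, W3, hW3, he⟩ := htable W hW W2 hW2
          refine ⟨a + a2 + e, b + b2 + d, W3, hW3, ?_⟩
          rw [smul_mul_smul_comm, he, smul_smul]
          congr 1; ring
    have hTT : T * T ∈ Jset := by
      refine ⟨0, 0, T, Or.inl rfl, ?_⟩
      rw [hT2]; simp
    have hadj := hSI Jset hJI (T * T) hTT
    have hAA : adjoint (T * T) = c • A := by
      rw [← star_eq_adjoint, star_mul, hstarT, hA2]
    rw [hAA] at hadj
    obtain ⟨a, b, W, hW, heq⟩ := hadj
    have hln : 0 < ‖l‖ := norm_pos_iff.mpr htr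
    have hcn : ‖c‖ = ‖l‖ := by rw [← hcdef]; exact RCLike.norm_conj l
    have hc0 : c ≠ 0 := norm_pos_iff.mp (by rw [hcn]; exact hln)
    have hl1 : ‖l‖ < 1 := by
      have hle : ‖l‖ ≤ 1 := by
        rw [← hgf]
        calc ‖⟪g, f⟫‖ ≤ ‖g‖ * ‖f‖ := norm_inner_le_norm g f
          _ = 1 := by rw [hgn, hf, mul_one]
      rcases lt_or_eq_of_le hle with h | h
      · exact h
      · exfalso
        have heqn : ‖⟪g, f⟫‖ = ‖g‖ * ‖f‖ := by rw [hgf, h, hgn, hf]; norm_num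
        obtain ⟨r, hr0, hrf⟩ := (norm_inner_eq_norm_iff hg0 hf0).mp heqn
        exact hpar r⁻¹ (by rw [hrf, smul_smul, inv_mul_cancel₀ hr0, one_smul])
    have hcontra : ∀ k : ℕ, 2 ≤ k → ‖l‖ = ‖l‖ ^ k → False := by
      intro k hk h
      have h2 := pow_lt_pow_right_of_lt_one₀ hln hl1 (show 1 < k by omega)
      rw [pow_one, ← h] at h2
      exact lt_irrefl _ h2
    have hnorm_mu : ∀ a b : ℕ, ‖l ^ a * c ^ b‖ = ‖l‖ ^ (a + b) := by
      intro a b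
      rw [norm_mul, norm_pow, norm_pow, hcn, ← pow_add]
    have hev : c • g = (l ^ (a + 1) * c ^ b) • (W f) := by
      have h0 : (c • A) f = ((l ^ (a + 1) * c ^ b) • W) f := by rw [heq]
      rw [smul_apply, smul_apply, hgdef] at h0
      exact h0
    rcases hW with h | h | h | h <;> rw [h] at hev
    · rw [hTf, smul_smul] at hev
      exact hpar (c⁻¹ * (l ^ (a + 1) * c ^ b * l))
        (by rw [show g = c⁻¹ • (c • g) by rw [smul_smul, inv_mul_cancel₀ hc0, one_smul], hev,
          smul_smul])
    · rw [hgdef] at hev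
      have hce : c = l ^ (a + 1) * c ^ b := smul_left_injective ℂ hg0 hev
      by_cases hab : a = 0 ∧ b = 0
      · obtain ⟨rfl, rfl⟩ := hab
        simp at hce
        exact hlr hce
      · apply hcontra ((a + 1) + b) (by omega)
        rw [← hnorm_mu (a + 1) b, ← hce, hcn]
    · rw [hTA f, hff, one_smul] at hev
      exact hpar (c⁻¹ * (l ^ (a + 1) * c ^ b))
        (by rw [show g = c⁻¹ • (c • g) by rw [smul_smul, inv_mul_cancel₀ hc0, one_smul], hev,
          smul_smul])
    · rw [hAT f, hgf, smul_smul] at hev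
      have hce : c = l ^ (a + 1) * c ^ b * l := smul_left_injective ℂ hg0 hev
      apply hcontra (a + 1 + b + 1) (by omega)
      have hn := congrArg norm hce
      rw [hcn, norm_mul, hnorm_mu, ← pow_succ] at hn
      exact hn
end

section
/- Let T be a rank one bounded operator on a complex Hilbert space H that is a partial isometry (T = T T* T). Then T is a power partial isometry (i.e., T^n = T^n (T^n)* T^n for all n ≥ 1) if and only if either tr T = 0 or |tr T| = 1. -/
open ContinuousLinearMap
open scoped ComplexInnerProductSpace

variable {H : Type*} [NormedAddCommGroup H] [InnerProductSpace ℂ H] [CompleteSpace H]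

/-- a rank one partial isometry `T` is a power partial isometry iff
either `tr T = 0` or `|tr T| = 1`. -/
theorem stmt16 (T : H →L[ℂ] H)
    (hpi : T = T * adjoint T * T)
    (f : H) (hf : ‖f‖ = 1)
    (hrange : LinearMap.range (T : H →ₗ[ℂ] H) = Submodule.span ℂ {f}) :
    (∀ n : ℕ, 1 ≤ n → T ^ n = T ^ n * adjoint (T ^ n) * T ^ n) ↔
      (⟪f, T f⟫ = 0 ∨ ‖⟪f, T f⟫‖ = 1) := by
  set lam : ℂ := ⟪f, T f⟫ with hlam
  have hff : ⟪f, f⟫ = (1 : ℂ) := by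
    rw [inner_self_eq_norm_sq_to_K, hf]; norm_num
  have hA : ∀ x : H, T x = ⟪f, T x⟫ • f := by
    intro x
    have hx : T x ∈ Submodule.span ℂ ({f} : Set H) := by
      rw [← hrange]; exact LinearMap.mem_range_self _ x
    obtain ⟨a, ha⟩ := Submodule.mem_span_singleton.mp hx
    rw [← ha, inner_smul_right, hff, mul_one]
  have hTf : T f = lam • f := hA f
  have hTne : T ≠ 0 := by
    intro h0
    have hfmem : f ∈ Submodule.span ℂ ({f} : Set H) := Submodule.mem_span_singleton_self f
    rw [← hrange] at hfmem
    obtain ⟨x, hx⟩ := hfmem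
    have : f = 0 := by rw [← hx, h0]; rfl
    rw [this, norm_zero] at hf; norm_num at hf
  have hT2 : T * T = lam • T := by
    ext x
    simp only [ContinuousLinearMap.mul_def, ContinuousLinearMap.comp_apply, smul_apply]
    rw [hA x, map_smul, hTf, smul_comm]
  have hpow : ∀ m : ℕ, T ^ (m + 1) = lam ^ m • T := by
    intro m
    induction m with
    | zero => simp
    | succ k ih =>
      rw [pow_succ, ih, smul_mul_assoc, hT2, smul_smul, pow_succ]
  have hcond : ∀ m : ℕ,
      (T ^ (m + 1) = T ^ (m + 1) * adjoint (T ^ (m + 1)) * T ^ (m + 1)) ↔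
        lam ^ m = lam ^ m * (starRingEnd ℂ) (lam ^ m) * lam ^ m := by
    intro m
    have key : lam ^ m • T * ((starRingEnd ℂ) (lam ^ m) • adjoint T) * (lam ^ m • T)
        = (lam ^ m * (starRingEnd ℂ) (lam ^ m) * lam ^ m) • T := by
      conv_rhs => rw [hpi]
      simp only [smul_mul_assoc, mul_smul_comm, smul_smul]
      ring_nf
    rw [hpow m, adjoint.map_smulₛₗ, key]
    constructor
    · intro h
      have h2 := sub_eq_zero.mpr h
      rw [← sub_smul] at h2
      rcases smul_eq_zero.mp h2 with hc | hT
      · exact sub_eq_zero.mp hc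
      · exact absurd hT hTne
    · intro h; rw [← h]
  constructor
  · intro h
    have h2 := (hcond 1).mp (h 2 one_le_two)
    simp only [pow_one] at h2
    by_cases h0 : lam = 0
    · exact Or.inl h0
    · right
      have hc : (starRingEnd ℂ) lam * lam = 1 := by
        have := mul_left_cancel₀ h0 (by rw [← mul_assoc, mul_one]; exact h2 :
          lam * 1 = lam * ((starRingEnd ℂ) lam * lam))
        exact this.symm
      have hre : lam.re * lam.re + lam.im * lam.im = 1 := by
        have := congrArg Complex.re hc
        simpa using this
      have hns : ‖lam‖ ^ 2 = 1 := by
        rw [Complex.sq_norm, Complex.normSq_apply]; exact hre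
      nlinarith [norm_nonneg lam]
  · intro h n hn
    obtain ⟨m, rfl⟩ := Nat.exists_eq_add_of_le hn
    rw [add_comm]
    apply (hcond m).mpr
    rcases h with h0 | h1
    · rcases Nat.eq_zero_or_pos m with rfl | hm
      · simp
      · rw [h0, zero_pow (by omega)]; ring
    · have : (starRingEnd ℂ) (lam ^ m) * lam ^ m = 1 := by
        rw [Complex.conj_mul', norm_pow, h1]
        norm_num
      rw [mul_assoc, this, mul_one]
end
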